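/- For every real p > 0 and natural k ≥ 0, with ℓ_k(p) := Σ_{m=1}^{k} 2^{-1-m}·m!/p^{(m+1)}, one has 0 < (d/dp) ln r(p) − ℓ_k(p) < 2^{-k-1}·(k+1)!/p^{(k+2)} < 2^{-k-1}/p. -/

import Mathlib

open Real MeasureTheory Set intervalIntegral

noncomputable def r (p : ℝ) : ℝ :=
  Real.Gamma ((p + 1) / 2) / (Real.sqrt (p / 2) * Real.Gamma (p / 2))

noncomputable def ell (k : ℕ) (p : ℝ) : ℝ :=
  ∑ m ∈ Finset.Icc 1 k, (1 / 2 ^ (m + 1)) * (m.factorial : ℝ) /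
    ∏ j ∈ Finset.range (m + 1), (p + j)

namespace LRAux

/-- Beta-type integral. -/
noncomputable def Jb (m : ℕ) (p : ℝ) : ℝ := ∫ t in (0:ℝ)..1, t ^ (p-1) * (1-t) ^ m

/-- With an extra `1/(1+t)` factor. -/
noncomputable def Kb (m : ℕ) (p : ℝ) : ℝ :=
  ∫ t in (0:ℝ)..1, t ^ (p-1) * ((1-t) ^ m / (1+t))

lemma contOn_aux (m : ℕ) : ContinuousOn (fun t : ℝ => (1-t)^m / (1+t)) (Set.uIcc (0:ℝ) 1) := by
  apply ContinuousOn.div (by fun_prop) (by fun_prop)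
  intro x hx
  rw [Set.uIcc_of_le (by norm_num)] at hx
  nlinarith [hx.1]

lemma intJ {p : ℝ} (hp : 0 < p) (m : ℕ) :
    IntervalIntegrable (fun t => t ^ (p-1) * (1-t) ^ m) volume 0 1 :=
  (intervalIntegrable_rpow' (by linarith)).mul_continuousOn (by fun_prop)

lemma intK {p : ℝ} (hp : 0 < p) (m : ℕ) :
    IntervalIntegrable (fun t => t ^ (p-1) * ((1-t) ^ m / (1+t))) volume 0 1 :=
  (intervalIntegrable_rpow' (by linarith)).mul_continuousOn (contOn_aux m)

lemma Jb_zero {p : ℝ} (hp : 0 < p) : Jb 0 p = 1 / p := by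
  unfold Jb
  simp only [pow_zero, mul_one]
  rw [integral_rpow (Or.inl (by linarith))]
  rw [show p - 1 + 1 = p by ring, Real.one_rpow, Real.zero_rpow hp.ne']
  ring

lemma Jb_succ {p : ℝ} (hp : 0 < p) (m : ℕ) :
    Jb (m+1) p = ((m:ℝ)+1) / p * Jb m (p+1) := by
  have key : (∫ t in (0:ℝ)..1,
      (p * (t ^ (p-1) * (1-t) ^ (m+1)) - ((m:ℝ)+1) * (t ^ ((p+1)-1) * (1-t) ^ m))) = 0 := by
    have hcont : ContinuousOn (fun t : ℝ => t ^ p * (1-t) ^ (m+1)) (Icc 0 1) :=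
      (continuousOn_id.rpow_const fun _ _ => Or.inr hp.le).mul (by fun_prop)
    have hderiv : ∀ t ∈ Ioo (0:ℝ) 1, HasDerivAt (fun t : ℝ => t ^ p * (1-t) ^ (m+1))
        (p * (t ^ (p-1) * (1-t) ^ (m+1)) - ((m:ℝ)+1) * (t ^ ((p+1)-1) * (1-t) ^ m)) t := by
      intro t ht
      have h1 : HasDerivAt (fun t : ℝ => t ^ p) (p * t ^ (p-1)) t :=
        Real.hasDerivAt_rpow_const (Or.inl ht.1.ne')
      have h2 : HasDerivAt (fun t : ℝ => (1-t) ^ (m+1))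
          ((((m:ℝ)+1) * (1-t) ^ m) * (-1)) t := by
        have hb : HasDerivAt (fun t : ℝ => 1 - t) (-1) t := (hasDerivAt_id t).const_sub 1
        have := (hasDerivAt_pow (m+1) (1-t)).comp t hb
        exact this.congr_deriv (by simp)
      have h3 := h1.mul h2
      refine h3.congr_deriv ?_
      rw [show p + 1 - 1 = p by ring]
      push_cast
      ring
    have hint : IntervalIntegrable (fun t : ℝ =>
        p * (t ^ (p-1) * (1-t) ^ (m+1)) - ((m:ℝ)+1) * (t ^ ((p+1)-1) * (1-t) ^ m))
        volume 0 1 :=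
      ((intJ hp (m+1)).const_mul p).sub ((intJ (by linarith : (0:ℝ) < p+1) m).const_mul _)
    rw [integral_eq_sub_of_hasDerivAt_of_le (by norm_num) hcont hderiv hint]
    rw [Real.one_rpow, Real.zero_rpow hp.ne']
    norm_num
  rw [intervalIntegral.integral_sub ((intJ hp (m+1)).const_mul p)
      ((intJ (by linarith : (0:ℝ) < p+1) m).const_mul _),
    intervalIntegral.integral_const_mul, intervalIntegral.integral_const_mul] at key
  have : p * Jb (m+1) p = ((m:ℝ)+1) * Jb m (p+1) := by
    unfold Jb; linarith
  field_simp
  linarith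

lemma Jb_eq (m : ℕ) : ∀ p : ℝ, 0 < p →
    Jb m p = (m.factorial : ℝ) / ∏ j ∈ Finset.range (m+1), (p + j) := by
  induction m with
  | zero => intro p hp; simpa using Jb_zero hp
  | succ m ih =>
    intro p hp
    rw [Jb_succ hp m, ih (p+1) (by linarith)]
    rw [Finset.prod_range_succ' (fun j : ℕ => p + j) (m+1)]
    have h1 : ∏ j ∈ Finset.range (m+1), (p + ((j:ℕ)+1:ℕ)) =
        ∏ j ∈ Finset.range (m+1), ((p+1) + j) := by
      apply Finset.prod_congr rfl; intro j _; push_cast; ring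
    have h2 : (0:ℝ) < ∏ j ∈ Finset.range (m+1), ((p+1) + j) := by
      apply Finset.prod_pos; intro j _; positivity
    push_cast [Nat.factorial_succ] at *
    rw [h1]
    field_simp
    ring

lemma Kb_step {p : ℝ} (hp : 0 < p) (m : ℕ) :
    Kb m p = (1/2) * Jb m p + (1/2) * Kb (m+1) p := by
  unfold Jb Kb
  rw [← intervalIntegral.integral_const_mul, ← intervalIntegral.integral_const_mul,
    ← intervalIntegral.integral_add ((intJ hp m).const_mul _) ((intK hp (m+1)).const_mul _)]
  apply intervalIntegral.integral_congr
  intro t ht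
  rw [Set.uIcc_of_le (by norm_num)] at ht
  have h1 : (0:ℝ) < 1 + t := by linarith [ht.1]
  field_simp
  ring

lemma Kb_pos {p : ℝ} (hp : 0 < p) (m : ℕ) : 0 < Kb m p := by
  apply intervalIntegral.intervalIntegral_pos_of_pos_on (intK hp m) _ one_pos
  intro t ht
  have h1 : (0:ℝ) < t ^ (p-1) := Real.rpow_pos_of_pos ht.1 _
  have h2 : (0:ℝ) < 1 - t := by linarith [ht.2]
  have h3 : (0:ℝ) < 1 + t := by linarith [ht.1]
  positivity

lemma Kb_lt_Jb {p : ℝ} (hp : 0 < p) (m : ℕ) : Kb m p < Jb m p := by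
  have h : 0 < Jb m p - Kb m p := by
    unfold Jb Kb
    rw [← intervalIntegral.integral_sub (intJ hp m) (intK hp m)]
    apply intervalIntegral.intervalIntegral_pos_of_pos_on
      ((intJ hp m).sub (intK hp m)) _ one_pos
    intro t ht
    have h1 : (0:ℝ) < t ^ (p-1) := Real.rpow_pos_of_pos ht.1 _
    have h2 : (0:ℝ) < 1 - t := by linarith [ht.2]
    have h3 : (0:ℝ) < 1 + t := by linarith [ht.1]
    have h4 : (1-t)^m / (1+t) < (1-t)^m := by
      rw [div_lt_iff₀ h3]; nlinarith [mul_pos (pow_pos h2 m) ht.1]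
    nlinarith [mul_lt_mul_of_pos_left h4 h1]
  linarith

lemma Jb_lt {p : ℝ} (hp : 0 < p) (m : ℕ) : Jb (m+1) p < 1 / p := by
  rw [← Jb_zero hp]
  have h : 0 < Jb 0 p - Jb (m+1) p := by
    unfold Jb
    rw [← intervalIntegral.integral_sub (intJ hp 0) (intJ hp (m+1))]
    apply intervalIntegral.intervalIntegral_pos_of_pos_on
      ((intJ hp 0).sub (intJ hp (m+1))) _ one_pos
    intro t ht
    have h1 : (0:ℝ) < t ^ (p-1) := Real.rpow_pos_of_pos ht.1 _
    have h2 : (0:ℝ) < 1 - t := by linarith [ht.2]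
    have h4 : (1-t)^(m+1) < 1 := pow_lt_one₀ h2.le (by linarith [ht.1]) (by omega)
    simp only [pow_zero, mul_one]
    nlinarith [pow_pos h2 (m+1)]
  linarith

lemma Kb_telescope {p : ℝ} (hp : 0 < p) (k : ℕ) :
    (1/2) * Kb 1 p = (∑ m ∈ Finset.Icc 1 k, (1/2^(m+1)) * Jb m p) + (1/2^(k+1)) * Kb (k+1) p := by
  induction k with
  | zero => simp
  | succ k ih =>
    rw [ih, Finset.sum_Icc_succ_top (by omega : 1 ≤ k+1), Kb_step hp (k+1)]
    ring

lemma Kb_refl {p : ℝ} (hp : 0 < p) : Kb 1 p + Kb 1 (p+1) = Jb 1 p := by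
  unfold Jb Kb
  rw [← intervalIntegral.integral_add (intK hp 1) (intK (by linarith) 1)]
  apply intervalIntegral.integral_congr
  intro t ht
  rw [Set.uIcc_of_le (by norm_num)] at ht
  dsimp only
  rcases eq_or_lt_of_le ht.1 with h0 | h0
  · rw [← h0]
    rw [Real.zero_rpow (by linarith : p + 1 - 1 ≠ 0)]
    norm_num
  · have h1 : (0:ℝ) < 1 + t := by linarith
    have h2 : t ^ (p+1-1) = t ^ (p-1) * t := by
      rw [show p + 1 - 1 = (p-1) + 1 by ring, Real.rpow_add_one h0.ne']
    rw [h2]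
    field_simp
noncomputable def dL (x : ℝ) : ℝ := deriv (fun y => Real.log (Real.Gamma y)) x

lemma Gamma_diff {x : ℝ} (hx : 0 < x) : DifferentiableAt ℝ Real.Gamma x :=
  Real.differentiableAt_Gamma (fun m => by
    have : (0:ℝ) ≤ m := Nat.cast_nonneg m
    intro h; rw [h] at hx; linarith)

lemma hasDerivAt_logGamma {x : ℝ} (hx : 0 < x) :
    HasDerivAt (fun y => Real.log (Real.Gamma y)) (dL x) x :=
  ((Gamma_diff hx).log (Real.Gamma_pos_of_pos hx).ne').hasDerivAt

lemma Lrec {y : ℝ} (hy : 0 < y) :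
    Real.log (Real.Gamma (y+1)) = Real.log (Real.Gamma y) + Real.log y := by
  rw [Real.Gamma_add_one hy.ne', Real.log_mul hy.ne' (Real.Gamma_pos_of_pos hy).ne']
  ring

lemma dL_add_one {x : ℝ} (hx : 0 < x) : dL (x+1) = dL x + 1/x := by
  have heq : (fun y => Real.log (Real.Gamma (y+1))) =ᶠ[nhds x]
      (fun y => Real.log (Real.Gamma y) + Real.log y) := by
    filter_upwards [IsOpen.mem_nhds isOpen_Ioi hx] with y hy
    exact Lrec hy
  have h1 : deriv (fun y => Real.log (Real.Gamma (y+1))) x = dL (x+1) :=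
    deriv_comp_add_const (fun y => Real.log (Real.Gamma y)) 1 x
  have h2 : HasDerivAt (fun y => Real.log (Real.Gamma y) + Real.log y) (dL x + x⁻¹) x :=
    (hasDerivAt_logGamma hx).add (Real.hasDerivAt_log hx.ne')
  rw [← h1, heq.deriv_eq, h2.deriv, one_div]

lemma logr_eq {q : ℝ} (hq : 0 < q) : Real.log (r q) =
    Real.log (Real.Gamma ((q+1)/2)) - Real.log (Real.Gamma (q/2))
      - (1/2) * Real.log q + (1/2) * Real.log 2 := by
  have hG1 : (0:ℝ) < Real.Gamma ((q+1)/2) := Real.Gamma_pos_of_pos (by linarith)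
  have hG2 : (0:ℝ) < Real.Gamma (q/2) := Real.Gamma_pos_of_pos (by linarith)
  have hs : (0:ℝ) < Real.sqrt (q/2) := Real.sqrt_pos.mpr (by linarith)
  unfold r
  rw [Real.log_div hG1.ne' (by positivity), Real.log_mul hs.ne' hG2.ne',
      Real.log_sqrt (by linarith), Real.log_div hq.ne' two_ne_zero]
  ring

lemma D_eq {p : ℝ} (hp : 0 < p) : deriv (fun q => Real.log (r q)) p =
    (1/2) * dL ((p+1)/2) - (1/2) * dL (p/2) - 1/(2*p) := by
  have heq : (fun q => Real.log (r q)) =ᶠ[nhds p] (fun q =>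
      Real.log (Real.Gamma ((q+1)/2)) - Real.log (Real.Gamma (q/2))
      - (1/2) * Real.log q + (1/2) * Real.log 2) := by
    filter_upwards [IsOpen.mem_nhds isOpen_Ioi hp] with q hq
    exact logr_eq hq
  have hi : HasDerivAt (fun q : ℝ => (q+1)/2) (1/2) p := by
    simpa using (((hasDerivAt_id p).add_const 1).div_const 2)
  have hi2 : HasDerivAt (fun q : ℝ => q/2) (1/2) p := by
    simpa using ((hasDerivAt_id p).div_const 2)
  have h1 : HasDerivAt (fun q => Real.log (Real.Gamma ((q+1)/2))) (dL ((p+1)/2) * (1/2)) p :=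
    by have := (hasDerivAt_logGamma (by linarith : (0:ℝ) < (p+1)/2)).comp p hi; exact this
  have h2 : HasDerivAt (fun q => Real.log (Real.Gamma (q/2))) (dL (p/2) * (1/2)) p :=
    by have := (hasDerivAt_logGamma (by linarith : (0:ℝ) < p/2)).comp p hi2; exact this
  have h3 : HasDerivAt (fun q : ℝ => (1/2) * Real.log q) ((1/2) * p⁻¹) p :=
    (Real.hasDerivAt_log hp.ne').const_mul (1/2)
  have h := ((h1.sub h2).sub h3).add_const ((1/2) * Real.log 2)
  have h' : HasDerivAt (fun q => Real.log (Real.Gamma ((q+1)/2)) - Real.log (Real.Gamma (q/2))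
      - (1/2) * Real.log q + (1/2) * Real.log 2) _ p := h
  rw [heq.deriv_eq, h'.deriv]
  field_simp

lemma D_add {p : ℝ} (hp : 0 < p) :
    deriv (fun q => Real.log (r q)) p + deriv (fun q => Real.log (r q)) (p+1)
      = 1/(2*p) - 1/(2*(p+1)) := by
  rw [D_eq hp, D_eq (by linarith : (0:ℝ) < p+1)]
  rw [show (p+1+1)/2 = p/2 + 1 by ring, dL_add_one (by linarith : (0:ℝ) < p/2)]
  field_simp
  ring

lemma D_bound {q : ℝ} (hq : 1 < q) :
    |deriv (fun s => Real.log (r s)) q| ≤ 2/(q-1) := by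
  have hq0 : 0 < q := by linarith
  rw [D_eq hq0]
  set L : ℝ → ℝ := fun y => Real.log (Real.Gamma y) with hLdef
  have hC : ConvexOn ℝ (Ioi 0) L := Real.convexOn_log_Gamma
  have hdiff : ∀ y : ℝ, 0 < y → DifferentiableAt ℝ L y := fun y hy =>
    ((Gamma_diff hy).log (Real.Gamma_pos_of_pos hy).ne')
  set x : ℝ := q/2 with hxdef
  have hx12 : (0:ℝ) < x - 1/2 := by rw [hxdef]; linarith
  have m1 : x - 1/2 ∈ Ioi (0:ℝ) := hx12
  have m2 : x ∈ Ioi (0:ℝ) := by simp only [mem_Ioi]; linarith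
  have m3 : x + 1/2 ∈ Ioi (0:ℝ) := by simp only [mem_Ioi]; linarith
  have m4 : x + 1 ∈ Ioi (0:ℝ) := by simp only [mem_Ioi]; linarith
  have m5 : x + 3/2 ∈ Ioi (0:ℝ) := by simp only [mem_Ioi]; linarith
  have hderiv : ∀ y : ℝ, deriv L y = dL y := fun _ => rfl
  have half : ∀ a : ℝ, a / (1/2 : ℝ) = 2*a := fun a => by ring
  -- slope facts
  have s1 : dL (x+1/2) ≤ 2*(L (x+1) - L (x+1/2)) := by
    have := hC.deriv_le_slope m3 m4 (by linarith) (hdiff _ (by linarith))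
    rw [slope_def_field, hderiv] at this
    rw [show (x+1) - (x+1/2) = 1/2 by ring, half] at this
    exact this
  have s2 : 2*(L (x+1) - L (x+1/2)) ≤ 2*(L (x+3/2) - L (x+1)) := by
    have := hC.slope_mono_adjacent m3 m5 (by linarith : x+1/2 < x+1) (by linarith)
    rw [show (x+1) - (x+1/2) = 1/2 by ring, show (x+3/2) - (x+1) = 1/2 by ring,
      half, half] at this
    exact this
  have s3 : 2*(L (x+1/2) - L x) ≤ 2*(L (x+1) - L (x+1/2)) := by
    have := hC.slope_mono_adjacent m2 m4 (by linarith : x < x+1/2) (by linarith)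
    rw [show (x+1/2) - x = 1/2 by ring, show (x+1) - (x+1/2) = 1/2 by ring,
      half, half] at this
    exact this
  have s4 : 2*(L x - L (x-1/2)) ≤ dL x := by
    have := hC.slope_le_deriv m1 m2 (by linarith) (hdiff _ (by linarith))
    rw [slope_def_field, hderiv] at this
    rw [show x - (x-1/2) = 1/2 by ring, half] at this
    exact this
  have s5 : dL x ≤ 2*(L (x+1/2) - L x) := by
    have := hC.deriv_le_slope m2 m3 (by linarith) (hdiff _ (by linarith))
    rw [slope_def_field, hderiv] at this
    rw [show (x+1/2) - x = 1/2 by ring, half] at this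
    exact this
  have s6 : 2*(L (x+1/2) - L x) ≤ dL (x+1/2) := by
    have := hC.slope_le_deriv m2 m3 (by linarith) (hdiff _ (by linarith))
    rw [slope_def_field, hderiv] at this
    rw [show (x+1/2) - x = 1/2 by ring, half] at this
    exact this
  have hrec1 : L (x+3/2) = L (x+1/2) + Real.log (x+1/2) := by
    have := Lrec (y := x+1/2) (by linarith)
    rw [show x+1/2+1 = x+3/2 by ring] at this
    exact this
  have hrec2 : L (x+1/2) = L (x-1/2) + Real.log (x-1/2) := by
    have := Lrec (y := x-1/2) hx12
    rw [show x-1/2+1 = x+1/2 by ring] at this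
    exact this
  have hlog : Real.log (x+1/2) - Real.log (x-1/2) ≤ 2/(q-1) := by
    rw [← Real.log_div (by linarith) (by linarith)]
    refine le_trans (Real.log_le_sub_one_of_pos (by positivity)) ?_
    have : (x+1/2)/(x-1/2) - 1 = 2/(q-1) := by
      have h3 : q - 1 ≠ 0 := by linarith
      have h2 : x - 1/2 ≠ 0 := hx12.ne'
      rw [hxdef] at h2 ⊢
      field_simp
      ring
    linarith [this]
  have hinv : 1/(2*q) ≤ 2/(q-1) := by
    rw [div_le_div_iff₀ (by linarith) (by linarith)]; nlinarith
  have hinvpos : 0 < 1/(2*q) := by positivity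
  rw [show (q+1)/2 = x + 1/2 by rw [hxdef]; ring]
  rw [abs_le]
  constructor
  · nlinarith
  · nlinarith

noncomputable def Iv (p : ℝ) : ℝ := (1/2) * Kb 1 p

lemma Jb_one {p : ℝ} (hp : 0 < p) : Jb 1 p = 1/(p*(p+1)) := by
  have := Jb_eq 1 p hp
  simp [Finset.prod_range_succ] at this
  rw [this]
  field_simp

lemma Iv_add {p : ℝ} (hp : 0 < p) : Iv p + Iv (p+1) = 1/(2*p) - 1/(2*(p+1)) := by
  unfold Iv
  have h := Kb_refl hp
  rw [Jb_one hp] at h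
  have hp1 : (0:ℝ) < p + 1 := by linarith
  field_simp at h ⊢
  nlinarith [h]

lemma Iv_pos {p : ℝ} (hp : 0 < p) : 0 < Iv p := by
  have := Kb_pos hp 1; unfold Iv; linarith

lemma Iv_le {p : ℝ} (hp : 0 < p) : Iv p ≤ 1/p := by
  have h1 := Kb_lt_Jb hp 1
  have h2 := Jb_lt hp 0
  have h3 : (0:ℝ) < 1/p := by positivity
  unfold Iv
  linarith

lemma E_step {p : ℝ} (hp : 0 < p) :
    deriv (fun q => Real.log (r q)) p - Iv p
      = -(deriv (fun q => Real.log (r q)) (p+1) - Iv (p+1)) := by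
  have h1 := D_add hp
  have h2 := Iv_add hp
  linarith

lemma E_iter {p : ℝ} (hp : 0 < p) (n : ℕ) :
    deriv (fun q => Real.log (r q)) p - Iv p
      = deriv (fun q => Real.log (r q)) (p + 2*n) - Iv (p + 2*n) := by
  induction n with
  | zero => norm_num
  | succ n ih =>
    have h0 : (0:ℝ) < p + 2*n := by positivity
    have h1 : (0:ℝ) < p + 2*n + 1 := by positivity
    have e1 := E_step h0
    have e2 := E_step h1
    rw [show p + 2*((n:ℕ)+1:ℕ) = (p + 2*(n:ℕ) + 1) + 1 by push_cast; ring]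
    rw [ih, e1, e2, neg_neg]

lemma D_eq_Iv {p : ℝ} (hp : 0 < p) :
    deriv (fun q => Real.log (r q)) p = Iv p := by
  have key : ∀ ε : ℝ, 0 < ε → |deriv (fun q => Real.log (r q)) p - Iv p| ≤ ε := by
    intro ε hε
    obtain ⟨n, hn⟩ := exists_nat_gt ((4/ε + 1)/2)
    set q : ℝ := p + 2*n with hqdef
    have hn' : 4/ε + 1 < 2*n := by linarith
    have hq1 : 1 < q := by
      have : (0:ℝ) < 4/ε := by positivity
      rw [hqdef]; linarith
    have hq4 : 4/ε ≤ q - 1 := by rw [hqdef]; linarith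
    have hq0 : 0 < q := by linarith
    rw [E_iter hp n]
    have hD := D_bound hq1
    have hI1 := Iv_pos hq0
    have hI2 := Iv_le hq0
    have habs : |deriv (fun s => Real.log (r s)) q - Iv q|
        ≤ |deriv (fun s => Real.log (r s)) q| + |Iv q| := abs_sub _ _
    have hIabs : |Iv q| ≤ 1/q := by rw [abs_of_pos hI1]; exact hI2
    have h1q : 1/q ≤ 2/(q-1) := by
      rw [div_le_div_iff₀ (by linarith) (by linarith)]; nlinarith
    have hfin : 4/(q-1) ≤ ε := by
      rw [div_le_iff₀ (by linarith : (0:ℝ) < q - 1)]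
      have h4 : (4:ℝ) = (4/ε)*ε := by field_simp
      nlinarith [mul_le_mul_of_nonneg_right hq4 hε.le]
    calc |deriv (fun s => Real.log (r s)) q - Iv q|
        ≤ 2/(q-1) + 2/(q-1) := by linarith
      _ = 4/(q-1) := by ring
      _ ≤ ε := hfin
  have h0 : |deriv (fun q => Real.log (r q)) p - Iv p| ≤ 0 := by
    by_contra h
    push_neg at h
    have := key (|deriv (fun q => Real.log (r q)) p - Iv p|/2) (by linarith)
    linarith
  have := abs_nonpos_iff.mp h0
  linarith

theorem main (p : ℝ) (hp : 0 < p) (k : ℕ) :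
    0 < deriv (fun q => Real.log (r q)) p - ell k p ∧
    deriv (fun q => Real.log (r q)) p - ell k p <
      (1 / 2 ^ (k + 1)) * ((k + 1).factorial : ℝ) / ∏ j ∈ Finset.range (k + 2), (p + j) ∧
    (1 / 2 ^ (k + 1)) * ((k + 1).factorial : ℝ) / (∏ j ∈ Finset.range (k + 2), (p + j)) <
      (1 / 2 ^ (k + 1)) / p := by
  have hEll : ell k p = ∑ m ∈ Finset.Icc 1 k, (1/2^(m+1)) * Jb m p := by
    unfold ell
    apply Finset.sum_congr rfl
    intro m _
    rw [Jb_eq m p hp, mul_div_assoc]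
  have hmain : deriv (fun q => Real.log (r q)) p - ell k p = (1/2^(k+1)) * Kb (k+1) p := by
    rw [D_eq_Iv hp, hEll]
    have := Kb_telescope hp k
    unfold Iv
    linarith
  have hJ : (1 / 2 ^ (k + 1)) * ((k + 1).factorial : ℝ) / ∏ j ∈ Finset.range (k + 2), (p + j)
      = (1/2^(k+1)) * Jb (k+1) p := by
    rw [Jb_eq (k+1) p hp, mul_div_assoc]
  have hpow : (0:ℝ) < 1/2^(k+1) := by positivity
  refine ⟨?_, ?_, ?_⟩
  · rw [hmain]
    exact mul_pos hpow (Kb_pos hp (k+1))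
  · rw [hmain, hJ]
    exact mul_lt_mul_of_pos_left (Kb_lt_Jb hp (k+1)) hpow
  · rw [hJ]
    have := Jb_lt hp k
    calc (1/2^(k+1)) * Jb (k+1) p < (1/2^(k+1)) * (1/p) := mul_lt_mul_of_pos_left this hpow
      _ = (1/2^(k+1))/p := by ring

end LRAux

theorem deriv_log_r_sub_ell_bounds (p : ℝ) (hp : 0 < p) (k : ℕ) :
    0 < deriv (fun q => Real.log (r q)) p - ell k p ∧
    deriv (fun q => Real.log (r q)) p - ell k p <
      (1 / 2 ^ (k + 1)) * ((k + 1).factorial : ℝ) / ∏ j ∈ Finset.range (k + 2), (p + j) ∧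
    (1 / 2 ^ (k + 1)) * ((k + 1).factorial : ℝ) / (∏ j ∈ Finset.range (k + 2), (p + j)) <
      (1 / 2 ^ (k + 1)) / p := LRAux.main p hp k
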